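/- (Upper bound) For every real T > 1 and every λ ∈ (0,1): (T^λ − T^{−λ})/λ ≤ (2 log T)^{1−λ} · (T − T^{−1})^λ. (Lower bound) For every ε > 0 there exists A(ε) > 0 such that for every real T > 1 and every λ ∈ (0,1): (T^λ − T^{−λ})/λ ≥ A(ε)^{−1} · (2 log T)^{1−λ+ε} · (T − T^{−1})^{λ−ε}. -/

import Mathlib

open Real MeasureTheory

/-- Average of `exp (c*u)` over `[-1,1]` equals `sinh c / c`. -/
lemma avg_exp_eq (c : ℝ) (hc : 0 < c) :
    ⨍ u in Set.Icc (-1:ℝ) 1, Real.exp (c * u) = Real.sinh c / c := by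
  have h1 : ∫ u in Set.Icc (-1:ℝ) 1, Real.exp (c * u)
      = ∫ u in (-1:ℝ)..1, Real.exp (c * u) := by
    rw [intervalIntegral.integral_of_le (by norm_num),
      MeasureTheory.integral_Icc_eq_integral_Ioc]
  have h2 : ∫ u in (-1:ℝ)..1, Real.exp (c * u)
      = (Real.exp c - Real.exp (-c)) / c := by
    rw [intervalIntegral.integral_comp_mul_left (fun x => Real.exp x) hc.ne']
    rw [integral_exp]
    rw [smul_eq_mul]
    ring_nf
  rw [MeasureTheory.setAverage_eq, h1, h2, Real.volume_real_Icc, Real.sinh_eq]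
  rw [smul_eq_mul]
  norm_num
  ring

lemma sinh_jensen (L lam : ℝ) (hL : 0 < L) (h0 : 0 < lam) (h1 : lam < 1) :
    Real.sinh (lam * L) / (lam * L) ≤ (Real.sinh L / L) ^ lam := by
  have hconc : ConcaveOn ℝ (Set.Ici 0) fun x : ℝ => x ^ lam :=
    Real.concaveOn_rpow h0.le h1.le
  have hgc : ContinuousOn (fun x : ℝ => x ^ lam) (Set.Ici 0) :=
    continuousOn_id.rpow_const (fun x _ => Or.inr h0.le)
  have hfi : IntegrableOn (fun u : ℝ => Real.exp (L * u)) (Set.Icc (-1) 1) volume :=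
    (Real.continuous_exp.comp (continuous_const.mul continuous_id)).integrableOn_Icc
  have hgi : IntegrableOn ((fun x : ℝ => x ^ lam) ∘ fun u : ℝ => Real.exp (L * u))
      (Set.Icc (-1) 1) volume := by
    apply Continuous.integrableOn_Icc
    exact (Real.continuous_exp.comp (continuous_const.mul continuous_id)).rpow_const
      (fun x => Or.inr h0.le)
  have key := hconc.le_map_set_average hgc isClosed_Ici
    (by simp [Real.volume_Icc] : volume (Set.Icc (-1:ℝ) 1) ≠ 0)
    (by simp [Real.volume_Icc] : volume (Set.Icc (-1:ℝ) 1) ≠ ⊤)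
    (Filter.Eventually.of_forall fun u => Set.mem_Ici.2 (Real.exp_pos _).le)
    hfi hgi
  have hcomp : (fun u : ℝ => (Real.exp (L * u)) ^ lam)
      = fun u : ℝ => Real.exp ((lam * L) * u) := by
    funext u
    rw [← Real.exp_mul]
    ring_nf
  have hxL : 0 < lam * L := mul_pos h0 hL
  calc Real.sinh (lam * L) / (lam * L)
      = ⨍ u in Set.Icc (-1:ℝ) 1, Real.exp ((lam * L) * u) := (avg_exp_eq _ hxL).symm
    _ = ⨍ u in Set.Icc (-1:ℝ) 1, (Real.exp (L * u)) ^ lam := by rw [hcomp]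
    _ ≤ (⨍ u in Set.Icc (-1:ℝ) 1, Real.exp (L * u)) ^ lam := key
    _ = (Real.sinh L / L) ^ lam := by rw [avg_exp_eq _ hL]

lemma lower_core (ε L lam : ℝ) (hε : 0 < ε) (hL : 0 < L) (h0 : 0 < lam) (h1 : lam < 1) :
    (2 + 2/ε)⁻¹ * (Real.sinh L / L) ^ (lam - ε) ≤ Real.sinh (lam * L) / (lam * L) := by
  set A : ℝ := 2 + 2/ε with hAdef
  have hA1 : 1 ≤ A := by
    have : 0 < 2/ε := by positivity
    simp only [hAdef]; linarith
  have hA0 : 0 < A := lt_of_lt_of_le one_pos hA1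
  clear_value A
  have hxL : 0 < lam * L := mul_pos h0 hL
  have hS1 : 1 ≤ Real.sinh L / L := by
    rw [le_div_iff₀ hL, one_mul]
    exact (Real.self_lt_sinh_iff.2 hL).le
  have hRHS1 : 1 ≤ Real.sinh (lam * L) / (lam * L) := by
    rw [le_div_iff₀ hxL, one_mul]
    exact (Real.self_lt_sinh_iff.2 hxL).le
  rcases le_or_gt lam ε with hle | hlt
  · have h2 : (Real.sinh L / L) ^ (lam - ε) ≤ 1 :=
      Real.rpow_le_one_of_one_le_of_nonpos hS1 (by linarith)
    have h3 : A⁻¹ * (Real.sinh L / L) ^ (lam - ε) ≤ 1 * 1 := by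
      apply mul_le_mul (by rw [inv_le_one_iff₀]; right; exact hA1) h2
        (Real.rpow_nonneg (by positivity) _) zero_le_one
    linarith
  · -- lam > ε
    have hsinhL_le : Real.sinh L ≤ L * Real.exp L := by
      rw [Real.sinh_eq, Real.exp_neg]
      have hEpos : 0 < Real.exp L := Real.exp_pos _
      have hinv : Real.exp L * (Real.exp L)⁻¹ = 1 := mul_inv_cancel₀ hEpos.ne'
      have h2L' : 1 - 2*L ≤ (Real.exp L)⁻¹ ^ 2 := by
        have := Real.add_one_le_exp (-(2*L))
        have hE : Real.exp (-(2*L)) = (Real.exp L)⁻¹ ^ 2 := by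
          rw [← Real.exp_neg, ← Real.exp_nat_mul]; norm_num
        linarith [hE ▸ this]
      rw [div_le_iff₀ (by norm_num : (0:ℝ) < 2)]
      nlinarith [mul_le_mul_of_nonneg_left h2L' hEpos.le, hinv, hEpos]
    have hSle : Real.sinh L / L ≤ Real.exp L := by
      rw [div_le_iff₀ hL]; nlinarith [Real.exp_pos L]
    have hstep1 : (Real.sinh L / L) ^ (lam - ε) ≤ Real.exp (L * (lam - ε)) := by
      rw [Real.exp_mul]
      exact Real.rpow_le_rpow (by positivity) hSle (by linarith)
    have hsinhx : (lam*L) * Real.exp (lam*L) ≤ Real.sinh (lam*L) * (1 + 2*(lam*L)) := by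
      set x := lam * L
      rw [Real.sinh_eq, Real.exp_neg]
      have h2x : 2*x + 1 ≤ Real.exp (2*x) := Real.add_one_le_exp _
      have hE2 : Real.exp (2*x) = Real.exp x ^ 2 := by rw [two_mul, Real.exp_add, sq]
      have hEpos : 0 < Real.exp x := Real.exp_pos _
      have hinv : Real.exp x * (Real.exp x)⁻¹ = 1 := mul_inv_cancel₀ hEpos.ne'
      nlinarith [hEpos, hxL]
    have hcomp : 1 + 2*(lam*L) ≤ A * Real.exp (L * ε) := by
      have he : 1 + L*ε ≤ Real.exp (L*ε) := by
        have := Real.add_one_le_exp (L*ε); linarith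
      have hAe : A * (1 + L*ε) ≤ A * Real.exp (L*ε) :=
        mul_le_mul_of_nonneg_left he hA0.le
      have hLl : lam * L ≤ L := by nlinarith
      have h2L : (2/ε) * (L*ε) = 2*L := by field_simp
      have hexpand : A * (1 + L*ε) = 2 + 2*(L*ε) + 2/ε + (2/ε)*(L*ε) := by
        rw [hAdef]; ring
      have hexpand2 : A * (1 + L*ε) = 2 + 2*(L*ε) + 2/ε + 2*L := by
        rw [hexpand, h2L]
      have hB : 0 < 2/ε := by positivity
      linarith [hAe, hexpand2, hLl, hB, mul_pos hL hε]
    have hfinal : A⁻¹ * Real.exp (L * (lam - ε)) ≤ Real.sinh (lam*L) / (lam*L) := by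
      have hexpsplit : Real.exp (L * (lam - ε)) = Real.exp (lam*L) / Real.exp (L*ε) := by
        rw [← Real.exp_sub]; ring_nf
      rw [hexpsplit, le_div_iff₀ hxL]
      rw [show A⁻¹ * (Real.exp (lam*L) / Real.exp (L*ε)) * (lam*L)
          = Real.exp (lam*L) * (lam*L) / (A * Real.exp (L*ε)) by
        field_simp]
      rw [div_le_iff₀ (by positivity)]
      nlinarith [mul_le_mul_of_nonneg_left hcomp (Real.sinh_pos_iff.2 hxL).le]
    calc A⁻¹ * (Real.sinh L / L) ^ (lam - ε)
        ≤ A⁻¹ * Real.exp (L * (lam - ε)) := by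
          apply mul_le_mul_of_nonneg_left hstep1 (by positivity)
      _ ≤ Real.sinh (lam*L) / (lam*L) := hfinal

/-- rewrite helper -/
lemma rw_helper (L a b : ℝ) (hL : 0 < L) (hab : a + b = 1) :
    (2*L) ^ a * (2*Real.sinh L) ^ b = (2*L) * (Real.sinh L / L) ^ b := by
  have hsL : 0 < Real.sinh L := Real.sinh_pos_iff.2 hL
  have h2 : 2*Real.sinh L = (2*L) * (Real.sinh L / L) := by field_simp
  have h3 : (2*Real.sinh L) ^ b = (2*L) ^ b * (Real.sinh L / L) ^ b := by
    rw [← Real.mul_rpow (by positivity) (by positivity), ← h2]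
  rw [h3, ← mul_assoc, ← Real.rpow_add (by positivity), hab, Real.rpow_one]

theorem stmt10 :
    (∀ T lam : ℝ, 1 < T → 0 < lam → lam < 1 →
        (T ^ lam - T ^ (-lam)) / lam ≤ (2 * Real.log T) ^ (1 - lam) * (T - T⁻¹) ^ lam) ∧
    (∀ ε : ℝ, 0 < ε → ∃ A : ℝ, 0 < A ∧
      ∀ T lam : ℝ, 1 < T → 0 < lam → lam < 1 →
        A⁻¹ * (2 * Real.log T) ^ (1 - lam + ε) * (T - T⁻¹) ^ (lam - ε)
          ≤ (T ^ lam - T ^ (-lam)) / lam) := by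
  have main : ∀ T lam : ℝ, 1 < T → 0 < lam →
      (T ^ lam - T ^ (-lam)) / lam
        = (2 * Real.log T) * (Real.sinh (lam * Real.log T) / (lam * Real.log T)) ∧
      T - T⁻¹ = 2 * Real.sinh (Real.log T) := by
    intro T lam hT h0
    have hT0 : (0:ℝ) < T := lt_trans one_pos hT
    have hL : 0 < Real.log T := Real.log_pos hT
    have hexp : Real.exp (Real.log T) = T := Real.exp_log hT0
    have hpow : ∀ c : ℝ, T ^ c = Real.exp (c * Real.log T) := fun c => by
      rw [Real.rpow_def_of_pos hT0, mul_comm]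
    constructor
    · rw [hpow, hpow, Real.sinh_eq, neg_mul]
      field_simp
    · rw [Real.sinh_eq, Real.exp_neg, hexp]
      ring
  constructor
  · intro T lam hT h0 h1
    have hL : 0 < Real.log T := Real.log_pos hT
    obtain ⟨e1, e2⟩ := main T lam hT h0
    rw [e1, e2, rw_helper _ _ _ hL (by ring)]
    exact mul_le_mul_of_nonneg_left (sinh_jensen _ _ hL h0 h1) (by positivity)
  · intro ε hε
    refine ⟨2 + 2/ε, by positivity, fun T lam hT h0 h1 => ?_⟩
    have hL : 0 < Real.log T := Real.log_pos hT
    obtain ⟨e1, e2⟩ := main T lam hT h0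
    rw [e1, e2, mul_assoc, rw_helper _ _ _ hL (by ring)]
    rw [← mul_assoc, mul_comm ((2+2/ε)⁻¹) (2*Real.log T), mul_assoc]
    exact mul_le_mul_of_nonneg_left (lower_core ε _ _ hε hL h0 h1) (by positivity)
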